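/- For p ≥ 0, the function x ↦ e^{-x} ∑_{n=1}^∞ ( ∑_{j=0}^{n-1} (j+r)_{p,λ} ) x^n/n! has derivative equal to φ_{p,λ}^{(r)}(x), the degenerate r-Bell polynomial. -/

import Mathlib

/-- Generalized falling factorial `(y)_{m,λ} = y(y-λ)⋯(y-(m-1)λ)`. -/
noncomputable def degFallFact (y l : ℝ) (m : ℕ) : ℝ :=
  ∏ i ∈ Finset.range m, (y - i * l)

/-- Degenerate r-Bell polynomial via the Dobinski-like formula
`φ_{p,λ}^{(r)}(x) = e^{-x} ∑_{k≥0} (k+r)_{p,λ} x^k/k!`. -/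
noncomputable def degBell (l : ℝ) (p r : ℕ) (x : ℝ) : ℝ :=
  Real.exp (-x) * ∑' k : ℕ, degFallFact (k + r) l p * x ^ k / k.factorial

open Finset

private lemma summable_pow_mul (q : ℕ) (R : ℝ) :
    Summable (fun n : ℕ => (n : ℝ) ^ q * R ^ n / n.factorial) := by
  induction q using Nat.strong_induction_on with
  | _ q ih =>
    rcases Nat.eq_zero_or_pos q with hq | hq
    · subst hq; simpa using Real.summable_pow_div_factorial R
    · obtain ⟨m, rfl⟩ := Nat.exists_eq_succ_of_ne_zero hq.ne'
      rw [← summable_nat_add_iff 1]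
      have key : ∀ n : ℕ, ((n + 1 : ℕ) : ℝ) ^ (m + 1) * R ^ (n + 1) / ((n + 1).factorial : ℝ)
          = ∑ k ∈ range (m + 1), ((m.choose k : ℝ) * R) * ((n : ℝ) ^ k * R ^ n / n.factorial) := by
        intro n
        have hfne : ((n.factorial : ℝ)) ≠ 0 := by
          exact_mod_cast n.factorial_ne_zero
        have h1 : ((n : ℝ) + 1) ^ m = ∑ k ∈ range (m + 1), (n : ℝ) ^ k * m.choose k := by
          rw [add_pow]; simp
        have hfact : (((n + 1).factorial : ℕ) : ℝ) = ((n : ℝ) + 1) * n.factorial := by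
          rw [Nat.factorial_succ]; push_cast; ring
        push_cast
        rw [hfact]
        calc ((n : ℝ) + 1) ^ (m + 1) * R ^ (n + 1) / (((n : ℝ) + 1) * n.factorial)
            = ((n : ℝ) + 1) ^ m * R * R ^ n / n.factorial := by
              field_simp; ring
          _ = _ := by
              rw [h1, Finset.sum_mul, Finset.sum_mul, Finset.sum_div]
              exact Finset.sum_congr rfl fun k _ => by ring
      exact (summable_sum fun k hk =>
        ((ih k (Finset.mem_range.mp hk)).mul_left _)).congr fun n => (key n).symm

private lemma summable_shifted_pow_mul (q : ℕ) (D R : ℝ) :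
    Summable (fun n : ℕ => ((n : ℝ) + D) ^ q * R ^ n / n.factorial) := by
  have key : ∀ n : ℕ, ((n : ℝ) + D) ^ q * R ^ n / n.factorial
      = ∑ k ∈ range (q + 1), (D ^ (q - k) * q.choose k) * ((n : ℝ) ^ k * R ^ n / n.factorial) := by
    intro n
    rw [add_pow, Finset.sum_mul, Finset.sum_div]
    exact Finset.sum_congr rfl fun k _ => by ring
  exact (summable_sum fun k _ => ((summable_pow_mul k R).mul_left _)).congr
    fun n => (key n).symm

private lemma summable_of_poly_bound (c : ℕ → ℝ) (q : ℕ) (D : ℝ) (x : ℝ)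
    (hc : ∀ n, |c n| ≤ ((n : ℝ) + D) ^ q) :
    Summable (fun n : ℕ => c n * x ^ n / n.factorial) := by
  apply Summable.of_norm_bounded (summable_shifted_pow_mul q D |x|)
  intro n
  have h1 : ‖c n * x ^ n / n.factorial‖ = |c n| * |x| ^ n / n.factorial := by
    rw [norm_div, norm_mul, Real.norm_eq_abs, Real.norm_eq_abs, abs_pow,
      Real.norm_natCast]
  rw [h1]
  gcongr ?_ * _ / _
  exact hc n

private lemma abs_degFallFact_le (l : ℝ) (p r : ℕ) (j : ℕ) :
    |degFallFact (↑j + ↑r) l p| ≤ ((j : ℝ) + ((r : ℝ) + p * |l|)) ^ p := by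
  unfold degFallFact
  rw [Finset.abs_prod]
  calc ∏ i ∈ range p, |(j : ℝ) + (r : ℝ) - i * l|
      ≤ ∏ _i ∈ range p, ((j : ℝ) + ((r : ℝ) + p * |l|)) := by
        apply Finset.prod_le_prod (fun i _ => abs_nonneg _)
        intro i hi
        have hi' : (i : ℝ) ≤ p := by
          exact_mod_cast (Finset.mem_range.mp hi).le
        have h1 : (i : ℝ) * |l| ≤ (p : ℝ) * |l| :=
          mul_le_mul_of_nonneg_right hi' (abs_nonneg l)
        have h2 : -((i : ℝ) * |l|) ≤ (i : ℝ) * l :=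
          neg_le_of_neg_le (by
            have := mul_le_mul_of_nonneg_left (neg_abs_le l) (Nat.cast_nonneg i : (0:ℝ) ≤ i)
            nlinarith)
        have h3 : (i : ℝ) * l ≤ (i : ℝ) * |l| :=
          mul_le_mul_of_nonneg_left (le_abs_self l) (Nat.cast_nonneg i)
        rw [abs_le]
        constructor <;> nlinarith [abs_nonneg l, Nat.cast_nonneg (α := ℝ) j,
          Nat.cast_nonneg (α := ℝ) r]
  _ = _ := by rw [Finset.prod_const, Finset.card_range]

private lemma abs_partial_sum_le (l : ℝ) (p r : ℕ) (n : ℕ) :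
    |∑ j ∈ Finset.range n, degFallFact (↑j + ↑r) l p|
      ≤ ((n : ℝ) + ((r : ℝ) + p * |l|)) ^ (p + 1) := by
  set D : ℝ := (r : ℝ) + p * |l| with hD
  have hD0 : 0 ≤ D := by positivity
  calc |∑ j ∈ Finset.range n, degFallFact (↑j + ↑r) l p|
      ≤ ∑ j ∈ Finset.range n, |degFallFact (↑j + ↑r) l p| :=
        Finset.abs_sum_le_sum_abs _ _
    _ ≤ ∑ j ∈ Finset.range n, ((n : ℝ) + D) ^ p := by
        apply Finset.sum_le_sum
        intro j hj
        refine (abs_degFallFact_le l p r j).trans ?_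
        have hj' : (j : ℝ) ≤ n := by
          exact_mod_cast (Finset.mem_range.mp hj).le
        exact pow_le_pow_left₀ (by positivity) (by linarith) p
    _ = (n : ℝ) * ((n : ℝ) + D) ^ p := by
        rw [Finset.sum_const, Finset.card_range, nsmul_eq_mul]
    _ ≤ ((n : ℝ) + D) * ((n : ℝ) + D) ^ p := by
        apply mul_le_mul_of_nonneg_right (by linarith) (by positivity)
    _ = ((n : ℝ) + D) ^ (p + 1) := by rw [pow_succ]; ring

/-- `d/dx (e^{-x} ∑_{n≥1} (∑_{j=0}^{n-1} (j+r)_{p,λ}) x^n/n!) = φ_{p,λ}^{(r)}(x)`. -/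
theorem deriv_exp_neg_mul_y (l : ℝ) (p r : ℕ) (x : ℝ) :
    HasDerivAt (fun y : ℝ => Real.exp (-y) *
      ∑' n : ℕ, (∑ j ∈ Finset.range n, degFallFact (j + r) l p) * y ^ n / n.factorial)
      (degBell l p r x) x := by
  set D : ℝ := (r : ℝ) + p * |l| with hDdef
  have hD0 : 0 ≤ D := by positivity
  set a : ℕ → ℝ := fun n => ∑ j ∈ Finset.range n, degFallFact (↑j + ↑r) l p with ha
  set b : ℕ → ℝ := fun j => degFallFact (↑j + ↑r) l p with hb
  have ha_bound : ∀ n, |a n| ≤ ((n : ℝ) + D) ^ (p + 1) := fun n => abs_partial_sum_le l p r n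
  set R : ℝ := |x| + 1 with hR
  have hR1 : (1 : ℝ) ≤ R := by rw [hR]; linarith [abs_nonneg x]
  -- derivative bound series
  set u : ℕ → ℝ := fun n => ((n : ℝ) + D) ^ (p + 2) * R ^ n / n.factorial with hu
  have hu_sum : Summable u := summable_shifted_pow_mul (p + 2) D R
  set g : ℕ → ℝ → ℝ := fun n y => a n * y ^ n / n.factorial with hg
  set g' : ℕ → ℝ → ℝ := fun n y => a n * ((n : ℝ) * y ^ (n - 1)) / n.factorial with hg'
  have hderiv : ∀ n y, HasDerivAt (g n) (g' n y) y := fun n y =>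
    ((hasDerivAt_pow n y).const_mul (a n)).div_const _
  have hbound : ∀ n (y : ℝ), y ∈ Metric.ball x 1 → ‖g' n y‖ ≤ u n := by
    intro n y hy
    have hyR : |y| ≤ R := by
      have h1 := mem_ball_iff_norm.mp hy
      rw [Real.norm_eq_abs] at h1
      have h2 := abs_sub_abs_le_abs_sub y x
      rw [hR]; linarith
    have h1 : ‖g' n y‖ = |a n| * ((n : ℝ) * |y| ^ (n - 1)) / n.factorial := by
      simp only [hg', norm_div, norm_mul, Real.norm_eq_abs, abs_pow, Real.norm_natCast,
        Nat.abs_cast]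
    rw [h1, hu]
    have hyRn : |y| ^ (n - 1) ≤ R ^ n :=
      (pow_le_pow_left₀ (abs_nonneg y) hyR _).trans
        (pow_le_pow_right₀ hR1 (Nat.sub_le n 1))
    have hn : (n : ℝ) ≤ (n : ℝ) + D := by linarith
    have hnum : |a n| * ((n : ℝ) * |y| ^ (n - 1))
        ≤ ((n : ℝ) + D) ^ (p + 1) * (((n : ℝ) + D) * R ^ n) := by
      apply mul_le_mul (ha_bound n)
        (mul_le_mul hn hyRn (by positivity) (by linarith [Nat.cast_nonneg (α := ℝ) n]))
        (by positivity) (by positivity)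
    calc |a n| * ((n : ℝ) * |y| ^ (n - 1)) / n.factorial
        ≤ ((n : ℝ) + D) ^ (p + 1) * (((n : ℝ) + D) * R ^ n) / n.factorial := by
          gcongr ?_ / _
      _ = ((n : ℝ) + D) ^ (p + 2) * R ^ n / n.factorial := by rw [pow_succ]; ring
  have hg0 : Summable (fun n => g n x) :=
    summable_of_poly_bound a (p + 1) D x ha_bound
  have HS : HasDerivAt (fun z : ℝ => ∑' n, g n z) (∑' n, g' n x) x :=
    hasDerivAt_tsum_of_isPreconnected hu_sum Metric.isOpen_ball
      (convex_ball x 1).isPreconnected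
      (fun n y _ => hderiv n y) hbound (Metric.mem_ball_self one_pos) hg0
      (Metric.mem_ball_self one_pos)
  have hexp : HasDerivAt (fun y : ℝ => Real.exp (-y)) (-Real.exp (-x)) x := by
    have := (Real.hasDerivAt_exp (-x)).comp x (hasDerivAt_neg x)
    simpa [mul_comm, Function.comp_def] using this
  have H := hexp.mul HS
  -- now identify the derivative value with degBell
  have hsum_g'x : Summable (fun n => g' n x) :=
    Summable.of_norm_bounded hu_sum fun n => hbound n x (Metric.mem_ball_self one_pos)
  have hshift_eq : ∀ n : ℕ, g' (n + 1) x = a (n + 1) * x ^ n / n.factorial := by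
    intro n
    have hne : ((n : ℝ) + 1) ≠ 0 := by positivity
    have hfne : ((n.factorial : ℝ)) ≠ 0 := by exact_mod_cast n.factorial_ne_zero
    simp only [hg', Nat.add_sub_cancel, Nat.factorial_succ, Nat.cast_mul, Nat.cast_add,
      Nat.cast_one]
    field_simp
  have hsum_shift : Summable (fun n => a (n + 1) * x ^ n / n.factorial) := by
    have := (summable_nat_add_iff 1).mpr hsum_g'x
    exact this.congr hshift_eq
  have hT : ∑' n, g' n x = ∑' n, a (n + 1) * x ^ n / n.factorial := by
    rw [Summable.tsum_eq_zero_add hsum_g'x]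
    have h0 : g' 0 x = 0 := by simp [hg']
    rw [h0, zero_add]
    exact tsum_congr hshift_eq
  have hdiff : ∀ n : ℕ, a (n + 1) * x ^ n / n.factorial - a n * x ^ n / n.factorial
      = b n * x ^ n / n.factorial := by
    intro n
    have : a (n + 1) = a n + b n := Finset.sum_range_succ _ n
    rw [this]; ring
  have hkey : ∑' n, g' n x - ∑' n, g n x
      = ∑' n, b n * x ^ n / n.factorial := by
    rw [hT, ← Summable.tsum_sub hsum_shift hg0]
    exact tsum_congr hdiff
  have hval : -Real.exp (-x) * (∑' n, g n x) + Real.exp (-x) * (∑' n, g' n x)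
      = degBell l p r x := by
    unfold degBell
    rw [show Real.exp (-x) * (∑' k : ℕ, degFallFact (↑k + ↑r) l p * x ^ k / k.factorial)
        = Real.exp (-x) * ∑' n, b n * x ^ n / n.factorial from rfl]
    rw [← hkey]
    ring
  rw [← hval]
  exact H
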